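/- Let P = {x ∈ R^n : a_ℓ'x ≤ b_ℓ, ℓ = 1,…,r} be a nonempty polyhedral set and H_ℓ = {x : a_ℓ'x ≤ b_ℓ} the individual half-spaces. Then there exists c > 0, depending only on the vectors a_1,…,a_r, such that dist(x, P) ≤ c Σ_{ℓ=1}^r dist(x, H_ℓ) for all x ∈ R^n (Hoffman bound). -/

import Mathlib

open Metric

section HoffmanAux
open Finset


lemma conic_carath_aux {r : ℕ} {E : Type*} [AddCommGroup E] [Module ℝ E] (a : Fin r → E) :
    ∀ N (l : Fin r → ℝ), (∀ i, 0 ≤ l i) →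
      (Finset.univ.filter (fun i => l i ≠ 0)).card ≤ N →
      ∃ μ : Fin r → ℝ, (∀ i, 0 ≤ μ i) ∧ (∀ i, μ i ≠ 0 → l i ≠ 0) ∧
        LinearIndependent ℝ (fun i : {i : Fin r // μ i ≠ 0} => a i) ∧
        ∑ i, μ i • a i = ∑ i, l i • a i := by
  classical
  intro N
  induction N with
  | zero =>
    intro l hl hcard
    have hz : ∀ i, l i = 0 := by
      intro i; by_contra h
      have hmem : i ∈ Finset.univ.filter (fun i => l i ≠ 0) := by simp [h]
      have := Finset.card_pos.2 ⟨i, hmem⟩; omega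
    refine ⟨l, hl, fun i hi => hi, ?_, rfl⟩
    haveI : IsEmpty {i : Fin r // l i ≠ 0} := ⟨fun i => i.2 (hz i.1)⟩
    exact linearIndependent_empty_type
  | succ N ih =>
    intro l hl hcard
    by_cases hind : LinearIndependent ℝ (fun i : {i : Fin r // l i ≠ 0} => a i)
    · exact ⟨l, hl, fun _ h => h, hind, rfl⟩
    obtain ⟨g, hgsum, j, hgj⟩ := Fintype.not_linearIndependent_iff.1 hind
    -- make the witness positive somewhere
    set gg : {i : Fin r // l i ≠ 0} → ℝ := if 0 < g j then g else -g with hgg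
    have hggsum : ∑ i, gg i • a (i : Fin r) = 0 := by
      by_cases h : 0 < g j
      · simpa [hgg, h] using hgsum
      · simp only [hgg, if_neg h, Pi.neg_apply, neg_smul, ← Finset.sum_neg_distrib]
        simp [hgsum]
    have hggj : 0 < gg j := by
      by_cases h : 0 < g j
      · simpa [hgg, h]
      · simp only [hgg, if_neg h, Pi.neg_apply]
        cases' hgj.lt_or_gt with h' h'
        · linarith
        · exact absurd h' h
    set ν : Fin r → ℝ := fun i => if h : l i ≠ 0 then gg ⟨i, h⟩ else 0 with hν
    have hνsum : ∑ i, ν i • a i = 0 := by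
      have h1 : ∑ i, ν i • a i
          = ∑ i ∈ Finset.univ.filter (fun i => l i ≠ 0), ν i • a i := by
        refine (Finset.sum_subset (Finset.subset_univ _) ?_).symm
        intro i _ hi
        simp only [Finset.mem_filter, Finset.mem_univ, true_and] at hi
        push_neg at hi
        simp [hν, hi]
      have h2 : ∑ i ∈ Finset.univ.filter (fun i => l i ≠ 0), ν i • a i
          = ∑ i : {i : Fin r // l i ≠ 0}, gg i • a (i : Fin r) := by
        rw [← Finset.sum_coe_sort]
        refine Fintype.sum_equiv (Equiv.subtypeEquivRight (by simp)) _ _ ?_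
        intro i
        have hi : l (i:Fin r) ≠ 0 := by
          have := i.2; simp only [Finset.mem_filter] at this; exact this.2
        show (if h : l (i:Fin r) ≠ 0 then gg ⟨i, h⟩ else 0) • a (i : Fin r) = _
        rw [dif_pos hi]
        rfl
      rw [h1, h2, hggsum]
    set T := Finset.univ.filter (fun i => 0 < ν i) with hT
    have hjT : (j : Fin r) ∈ T := by
      have : ν (j : Fin r) = gg j := by simp [hν, j.2]
      simp [hT, this, hggj]
    have hTne : T.Nonempty := ⟨_, hjT⟩
    set t := T.inf' hTne (fun i => l i / ν i) with ht
    have hνpos : ∀ i ∈ T, 0 < ν i := by intro i hi; simpa [hT] using hi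
    have ht0 : 0 ≤ t := by
      refine Finset.le_inf' hTne _ fun i hi => ?_
      exact div_nonneg (hl i) (hνpos i hi).le
    obtain ⟨i₀, hi₀T, hi₀⟩ := Finset.exists_mem_eq_inf' hTne (fun i => l i / ν i)
    set l' : Fin r → ℝ := fun i => l i - t * ν i with hl'
    have hsupp : ∀ i, l i = 0 → l' i = 0 := by
      intro i hi
      have : ν i = 0 := by simp [hν, hi]
      simp [hl', hi, this]
    have hl'0 : ∀ i, 0 ≤ l' i := by
      intro i
      rcases le_or_gt (ν i) 0 with h | h
      · have : t * ν i ≤ 0 := mul_nonpos_of_nonneg_of_nonpos ht0 h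
        simp only [hl']; linarith [hl i]
      · have hiT : i ∈ T := by simp [hT, h]
        have : t ≤ l i / ν i := Finset.inf'_le _ hiT
        have := (le_div_iff₀ h).1 this
        simp only [hl']; linarith
    have hi₀ν : 0 < ν i₀ := hνpos i₀ hi₀T
    have hl'i₀ : l' i₀ = 0 := by
      show l i₀ - t * ν i₀ = 0
      rw [ht, hi₀, div_mul_cancel₀ _ hi₀ν.ne', sub_self]
    have hli₀ : l i₀ ≠ 0 := by
      intro h
      have : ν i₀ = 0 := by simp [hν, h]
      rw [this] at hi₀ν; exact lt_irrefl _ hi₀ν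
    have hss : Finset.univ.filter (fun i => l' i ≠ 0) ⊂ Finset.univ.filter (fun i => l i ≠ 0) := by
      constructor
      · intro i hi
        simp only [Finset.mem_filter, Finset.mem_univ, true_and] at hi ⊢
        intro h; exact hi (hsupp i h)
      · intro h
        have := h (by simp [hli₀] : i₀ ∈ Finset.univ.filter (fun i => l i ≠ 0))
        simp only [Finset.mem_filter, Finset.mem_univ, true_and] at this
        exact this hl'i₀
    have hcard' : (Finset.univ.filter (fun i => l' i ≠ 0)).card ≤ N := by
      have := Finset.card_lt_card hss
      omega
    obtain ⟨μ, hμ0, hμsupp, hμind, hμsum⟩ := ih l' hl'0 hcard'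
    refine ⟨μ, hμ0, ?_, hμind, ?_⟩
    · intro i hi h
      exact hμsupp i hi (hsupp i h)
    · rw [hμsum]
      have : ∑ i, l' i • a i = ∑ i, l i • a i - t • ∑ i, ν i • a i := by
        rw [Finset.smul_sum, ← Finset.sum_sub_distrib]
        congr 1; ext i
        simp [hl', sub_smul, smul_smul]
      rw [this, hνsum, smul_zero, sub_zero]

section HB
open scoped RealInnerProductSpace
open Metric

variable {E : Type*} [NormedAddCommGroup E] [InnerProductSpace ℝ E]

lemma halfspace_bound (a : E) (ha : a ≠ 0) (b : ℝ) (x : E) :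
    ⟪a, x⟫ - b ≤ ‖a‖ * infDist x {z : E | ⟪a, z⟫ ≤ b} := by
  have hne : ({z : E | ⟪a, z⟫ ≤ b}).Nonempty := by
    refine ⟨(b / ‖a‖ ^ 2) • a, ?_⟩
    have h2 : ‖a‖ ^ 2 ≠ 0 := by
      have := norm_pos_iff.2 ha; positivity
    simp [real_inner_smul_right, real_inner_self_eq_norm_sq, div_mul_cancel₀, h2]
  have hpos : (0:ℝ) < ‖a‖ := norm_pos_iff.2 ha
  rw [← div_le_iff₀' hpos, infDist_eq_iInf]
  haveI : Nonempty ({z : E | ⟪a, z⟫ ≤ b}) := hne.to_subtype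
  refine le_ciInf fun z => ?_
  rw [div_le_iff₀ hpos, dist_eq_norm]
  have hz : ⟪a, (z : E)⟫ ≤ b := z.2
  calc ⟪a, x⟫ - b ≤ ⟪a, x⟫ - ⟪a, (z : E)⟫ := by linarith
  _ = ⟪a, x - z⟫ := by rw [inner_sub_right]
  _ ≤ ‖a‖ * ‖x - z‖ := real_inner_le_norm a _
  _ = ‖x - (z : E)‖ * ‖a‖ := mul_comm _ _

end HB


section pieces
variable {E : Type*} [NormedAddCommGroup E] [NormedSpace ℝ E]

/-- the linear combination map -/
noncomputable def combMap {ι : Type*} [Fintype ι] (v : ι → E) : (ι → ℝ) →ₗ[ℝ] E where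
  toFun l := ∑ j, l j • v j
  map_add' x y := by simp [add_smul, Finset.sum_add_distrib]
  map_smul' c x := by simp [smul_smul, Finset.smul_sum]

lemma coeff_bound {ι : Type*} [Fintype ι] (v : ι → E) (hv : LinearIndependent ℝ v) :
    ∃ C > (0:ℝ), ∀ l : ι → ℝ, ∀ i, |l i| ≤ C * ‖∑ j, l j • v j‖ := by
  classical
  set T := combMap v with hT
  have hinj : Function.Injective T := by
    rw [injective_iff_map_eq_zero]
    intro l hl
    funext i
    exact Fintype.linearIndependent_iff.1 hv l hl i
  let e := LinearEquiv.ofInjective T hinj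
  let ce := e.toContinuousLinearEquiv
  obtain ⟨K, hK⟩ : ∃ K : NNReal, AntilipschitzWith K ce := ⟨_, ce.antilipschitz⟩
  refine ⟨(K:ℝ) + 1, by positivity, fun l i => ?_⟩
  have h1 : ‖l‖ ≤ (K:ℝ) * ‖T l‖ := by
    have hd : ‖l‖ ≤ (K:ℝ) * ‖ce l - ce 0‖ := by
      simpa [dist_eq_norm] using hK.le_mul_dist l 0
    have hnorm : ‖ce l - ce 0‖ = ‖T l‖ := by
      rw [map_zero, sub_zero]
      have hcoe : ((ce l : LinearMap.range T) : E) = T l := by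
        simp [ce, e, LinearEquiv.coe_toContinuousLinearEquiv]
      rw [← hcoe]
      rfl
    rwa [hnorm] at hd
  have h2 : |l i| ≤ ‖l‖ := norm_le_pi_norm l i
  have h3 : ‖T l‖ = ‖∑ j, l j • v j‖ := rfl
  nlinarith [norm_nonneg (T l), h3 ▸ le_trans h2 h1, norm_nonneg (∑ j, l j • v j)]

lemma sum_restrict {ι : Type*} [Fintype ι] [DecidableEq ι] (v : ι → E) (S : Finset ι)
    (l : ι → ℝ) (h : ∀ i ∉ S, l i = 0) :
    ∑ i : {x // x ∈ S}, l i • v i = ∑ i, l i • v i := by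
  rw [Finset.sum_coe_sort S (fun i => l i • v i)]
  exact Finset.sum_subset (Finset.subset_univ S)
    (fun i _ hi => by rw [h i hi, zero_smul])

lemma cone_closed {r : ℕ} (a : Fin r → E) (Act : Set (Fin r)) :
    IsClosed {z : E | ∃ l : Fin r → ℝ, (∀ i, 0 ≤ l i) ∧ (∀ i, i ∉ Act → l i = 0) ∧
      z = ∑ i, l i • a i} := by
  classical
  have key : {z : E | ∃ l : Fin r → ℝ, (∀ i, 0 ≤ l i) ∧ (∀ i, i ∉ Act → l i = 0) ∧
      z = ∑ i, l i • a i}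
      = ⋃ S : Finset (Fin r),
        if (↑S ⊆ Act ∧ LinearIndependent ℝ (fun i : {x // x ∈ S} => a i)) then
          (combMap (fun i : {x // x ∈ S} => a (i:Fin r))) '' {l | ∀ i, 0 ≤ l i}
        else (∅ : Set E) := by
    ext z
    simp only [Set.mem_setOf_eq, Set.mem_iUnion]
    constructor
    · rintro ⟨l, hl0, hlsupp, rfl⟩
      obtain ⟨μ, hμ0, hμsupp, hμind, hμsum⟩ :=
        conic_carath_aux a (Finset.univ.filter (fun i => l i ≠ 0)).card l hl0 le_rfl
      set S := Finset.univ.filter (fun i => μ i ≠ 0) with hS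
      have hsub : (↑S : Set (Fin r)) ⊆ Act := by
        intro i hi
        simp only [hS, Finset.coe_filter, Set.mem_setOf_eq, Finset.mem_univ, true_and] at hi
        by_contra h
        exact hμsupp i hi (hlsupp i h)
      have hind : LinearIndependent ℝ (fun i : {x // x ∈ S} => a i) := by
        have he : ∀ i : {x // x ∈ S}, μ (i : Fin r) ≠ 0 := by
          intro i
          exact (Finset.mem_filter.1 i.2).2
        exact hμind.comp
          (fun i : {x // x ∈ S} => (⟨(i : Fin r), he i⟩ : {i : Fin r // μ i ≠ 0}))
          (fun i j hij => by
            apply Subtype.ext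
            exact congrArg (fun z : {i : Fin r // μ i ≠ 0} => (z : Fin r)) hij)
      refine ⟨S, ?_⟩
      rw [if_pos ⟨hsub, hind⟩]
      refine ⟨fun i => μ i, fun i => hμ0 i, ?_⟩
      show ∑ i : {x // x ∈ S}, μ i • a i = _
      rw [sum_restrict a S μ (fun i hi => by
        by_contra h; exact hi (by simp [hS, h]))]
      rw [hμsum]
    · rintro ⟨S, hz⟩
      by_cases hcond : (↑S ⊆ Act ∧ LinearIndependent ℝ (fun i : {x // x ∈ S} => a i))
      · rw [if_pos hcond] at hz
        obtain ⟨l, hl0, rfl⟩ := hz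
        refine ⟨fun i => if h : i ∈ S then l ⟨i, h⟩ else 0, ?_, ?_, ?_⟩
        · intro i; by_cases h : i ∈ S <;> simp [h, hl0 ⟨i, _⟩]
        · intro i hi
          have : i ∉ S := fun h => hi (hcond.1 h)
          simp [this]
        · rw [← sum_restrict a S _ (fun i hi => by simp [hi])]
          show _ = ∑ i : {x // x ∈ S},
            (if h : (i:Fin r) ∈ S then l ⟨i, h⟩ else 0) • a (i:Fin r)
          refine Finset.sum_congr rfl fun i _ => ?_
          rw [dif_pos i.2]
      · rw [if_neg hcond] at hz
        exact absurd hz (Set.notMem_empty z)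
  rw [key]
  apply isClosed_iUnion_of_finite
  intro S
  split_ifs with h
  · have hclosed : IsClosed {l : {x // x ∈ S} → ℝ | ∀ i, 0 ≤ l i} := by
      have : {l : {x // x ∈ S} → ℝ | ∀ i, 0 ≤ l i} = ⋂ i, {l | 0 ≤ l i} := by
        ext; simp
      rw [this]
      exact isClosed_iInter fun i => isClosed_le continuous_const (continuous_apply i)
    have hinj : LinearMap.ker (combMap (fun i : {x // x ∈ S} => a (i:Fin r))) = ⊥ := by
      rw [LinearMap.ker_eq_bot]
      rw [injective_iff_map_eq_zero]
      intro l hl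
      funext i
      exact Fintype.linearIndependent_iff.1 h.2 l hl i
    exact ((LinearMap.isClosedEmbedding_of_injective hinj).isClosedMap) _ hclosed
  · exact isClosed_empty
end pieces


end HoffmanAux

open scoped RealInnerProductSpace

/-- Hoffman bound: for a polyhedron `P = {x | ⟪aₗ, x⟫ ≤ bₗ, ℓ = 1,…,r}` there
is `c > 0` depending only on the vectors `aₗ` such that whenever `P` is
nonempty, `dist(x, P) ≤ c ∑ₗ dist(x, Hₗ)` for all `x`, where `Hₗ` is the
`ℓ`-th half-space. -/
theorem stmt12 {n r : ℕ} (a : Fin r → EuclideanSpace ℝ (Fin n)) :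
    ∃ c > (0 : ℝ), ∀ b : Fin r → ℝ,
      ({x : EuclideanSpace ℝ (Fin n) | ∀ ℓ, inner ℝ (a ℓ) x ≤ b ℓ}).Nonempty →
      ∀ x : EuclideanSpace ℝ (Fin n),
        infDist x {x : EuclideanSpace ℝ (Fin n) | ∀ ℓ, inner ℝ (a ℓ) x ≤ b ℓ}
          ≤ c * ∑ ℓ, infDist x {x : EuclideanSpace ℝ (Fin n) |
              inner ℝ (a ℓ) x ≤ (b ℓ : ℝ)} := by
  classical
  have perS : ∀ S : Finset (Fin r), ∃ C > (0:ℝ),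
      (LinearIndependent ℝ (fun i : {x // x ∈ S} => a i) →
        ∀ l : {x // x ∈ S} → ℝ, ∀ i, |l i| ≤ C * ‖∑ j, l j • a (j : Fin r)‖) := by
    intro S
    by_cases h : LinearIndependent ℝ (fun i : {x // x ∈ S} => a i)
    · obtain ⟨C, hCpos, hbound⟩ := coeff_bound _ h
      exact ⟨C, hCpos, fun _ => hbound⟩
    · exact ⟨1, one_pos, fun h' => absurd h' h⟩
  choose C hCpos hC using perS
  set M : ℝ := 1 + ∑ ℓ, ‖a ℓ‖ with hM
  have hMpos : 0 < M := by positivity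
  have hMle : ∀ ℓ, ‖a ℓ‖ ≤ M := by
    intro ℓ
    have : ‖a ℓ‖ ≤ ∑ j, ‖a j‖ :=
      Finset.single_le_sum (fun j _ => norm_nonneg _) (Finset.mem_univ ℓ)
    linarith
  have hsumC : 0 ≤ ∑ S : Finset (Fin r), C S :=
    Finset.sum_nonneg fun S _ => (hCpos S).le
  have hCle : ∀ S, C S ≤ 1 + ∑ S' : Finset (Fin r), C S' := by
    intro S
    have : C S ≤ ∑ S' : Finset (Fin r), C S' :=
      Finset.single_le_sum (fun S' _ => (hCpos S').le) (Finset.mem_univ S)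
    linarith
  set c := (1 + ∑ S : Finset (Fin r), C S) * M with hc
  have hcpos : 0 < c := mul_pos (by linarith) hMpos
  refine ⟨c, hcpos, ?_⟩
  intro b hP x
  set P := {z : EuclideanSpace ℝ (Fin n) | ∀ ℓ, ⟪a ℓ, z⟫ ≤ b ℓ} with hPdef
  have hDnonneg : 0 ≤ ∑ ℓ, infDist x {z : EuclideanSpace ℝ (Fin n) | ⟪a ℓ, z⟫ ≤ b ℓ} :=
    Finset.sum_nonneg fun ℓ _ => infDist_nonneg
  have hPconv : Convex ℝ P := by
    intro u hu v hv s t hs ht hst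
    intro ℓ
    have h1 := hu ℓ
    have h2 := hv ℓ
    have : ⟪a ℓ, s • u + t • v⟫ = s * ⟪a ℓ, u⟫ + t * ⟪a ℓ, v⟫ := by
      rw [inner_add_right, real_inner_smul_right, real_inner_smul_right]
    show ⟪a ℓ, s • u + t • v⟫ ≤ b ℓ
    rw [this]
    have e1 : s * ⟪a ℓ, u⟫ ≤ s * b ℓ := mul_le_mul_of_nonneg_left h1 hs
    have e2 : t * ⟪a ℓ, v⟫ ≤ t * b ℓ := mul_le_mul_of_nonneg_left h2 ht
    have e3 : s * b ℓ + t * b ℓ = b ℓ := by rw [← add_mul, hst, one_mul]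
    linarith
  have hPclosed : IsClosed P := by
    have : P = ⋂ ℓ, {z : EuclideanSpace ℝ (Fin n) | ⟪a ℓ, z⟫ ≤ b ℓ} := by
      ext z; simp [hPdef, Set.mem_iInter]
    rw [this]
    exact isClosed_iInter fun ℓ =>
      isClosed_le (continuous_const.inner continuous_id) continuous_const
  obtain ⟨y, hyP, hproj⟩ :=
    exists_norm_eq_iInf_of_complete_convex hP hPclosed.isComplete hPconv x
  have hnormal : ∀ w ∈ P, ⟪x - y, w - y⟫ ≤ 0 :=
    (norm_eq_iInf_iff_real_inner_le_zero hPconv hyP).1 hproj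
  have hdist : infDist x P = ‖x - y‖ := by
    rw [Metric.infDist_eq_iInf, hproj]
    simp_rw [dist_eq_norm]
  show infDist x P ≤ _
  rw [hdist]
  by_cases hxy : x - y = 0
  · rw [hxy, norm_zero]
    exact mul_nonneg hcpos.le hDnonneg
  -- the normal cone
  set K : ConvexCone ℝ (EuclideanSpace ℝ (Fin n)) :=
    { carrier := {z | ∃ l : Fin r → ℝ, (∀ i, 0 ≤ l i) ∧
        (∀ i, i ∉ {ℓ : Fin r | ⟪a ℓ, y⟫ = b ℓ} → l i = 0) ∧ z = ∑ i, l i • a i}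
      smul_mem' := by
        rintro t ht z ⟨l, hl0, hlsupp, rfl⟩
        refine ⟨fun i => t * l i, fun i => mul_nonneg ht.le (hl0 i),
          fun i hi => by show t * l i = 0; rw [hlsupp i hi, mul_zero], ?_⟩
        rw [Finset.smul_sum]
        exact Finset.sum_congr rfl fun i _ => by rw [smul_smul]
      add_mem' := by
        rintro z ⟨l, hl0, hlsupp, rfl⟩ w ⟨l', hl'0, hl'supp, rfl⟩
        refine ⟨fun i => l i + l' i, fun i => add_nonneg (hl0 i) (hl'0 i),
          fun i hi => by show l i + l' i = 0; rw [hlsupp i hi, hl'supp i hi, add_zero], ?_⟩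
        rw [← Finset.sum_add_distrib]
        exact Finset.sum_congr rfl fun i _ => by rw [add_smul] } with hKdef
  have hKne : (K : Set (EuclideanSpace ℝ (Fin n))).Nonempty :=
    ⟨0, ⟨fun _ => 0, fun _ => le_rfl, fun _ _ => rfl, by simp⟩⟩
  have hKcl : IsClosed (K : Set (EuclideanSpace ℝ (Fin n))) :=
    cone_closed a {ℓ : Fin r | ⟪a ℓ, y⟫ = b ℓ}
  have hdK : x - y ∈ K := by
    by_contra hdK
    obtain ⟨u, hu1, hu2⟩ : ∃ u, (∀ z ∈ K, 0 ≤ ⟪z, u⟫) ∧ ⟪u, x - y⟫ < 0 := by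
      have hK0 : (0 : EuclideanSpace ℝ (Fin n)) ∈ K :=
        ⟨fun _ => 0, fun _ => le_rfl, fun _ _ => rfl, by simp⟩
      let PK : ProperCone ℝ (EuclideanSpace ℝ (Fin n)) :=
        { carrier := (K : Set (EuclideanSpace ℝ (Fin n)))
          add_mem' := fun hx hy => K.add_mem hx hy
          zero_mem' := hK0
          smul_mem' := fun c z hz => by
            by_cases hc : c = 0
            · subst hc; rw [zero_smul]; exact hK0
            · change (c : ℝ) • z ∈ (K : Set (EuclideanSpace ℝ (Fin n)))
              exact K.smul_mem (lt_of_le_of_ne c.2 (Ne.symm (fun h => hc (Subtype.ext h)))) hz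
          isClosed' := hKcl }
      obtain ⟨u, h1, h2⟩ := ProperCone.hyperplane_separation' PK hdK
      exact ⟨u, h1, by rw [real_inner_comm]; exact h2⟩
    set v := -u with hv
    have hav : ∀ ℓ, ⟪a ℓ, y⟫ = b ℓ → ⟪a ℓ, v⟫ ≤ 0 := by
      intro ℓ hℓ
      have hmem : a ℓ ∈ K := by
        refine ⟨fun i => if i = ℓ then 1 else 0, ?_, ?_, ?_⟩
        · intro i
          show (0:ℝ) ≤ if i = ℓ then 1 else 0
          split <;> norm_num
        · intro i hi
          have hne : i ≠ ℓ := fun h => hi (h ▸ hℓ)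
          show (if i = ℓ then (1:ℝ) else 0) = 0
          simp [hne]
        · simp [ite_smul]
      have h0 := hu1 _ hmem
      rw [hv, inner_neg_right]
      linarith
    have hdv : 0 < ⟪x - y, v⟫ := by
      rw [hv, inner_neg_right, ← real_inner_comm]
      linarith
    set ε : Fin r → ℝ := fun ℓ =>
      if ⟪a ℓ, y⟫ = b ℓ then 1 else (b ℓ - ⟪a ℓ, y⟫) / (|⟪a ℓ, v⟫| + 1) with hε
    have hεpos : ∀ ℓ, 0 < ε ℓ := by
      intro ℓ
      show (0:ℝ) < if ⟪a ℓ, y⟫ = b ℓ then 1 else (b ℓ - ⟪a ℓ, y⟫) / (|⟪a ℓ, v⟫| + 1)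
      split_ifs with h
      · norm_num
      · have hlt : ⟪a ℓ, y⟫ < b ℓ := lt_of_le_of_ne (hyP ℓ) h
        exact div_pos (by linarith) (by positivity)
    set tset := insert (1:ℝ) (Finset.univ.image ε) with htset
    have htne : tset.Nonempty := ⟨1, Finset.mem_insert_self _ _⟩
    set t := tset.min' htne with ht
    have htpos : 0 < t := by
      have hall : ∀ z ∈ tset, (0:ℝ) < z := by
        intro z hz
        rcases Finset.mem_insert.1 hz with rfl | hz'
        · norm_num
        · obtain ⟨ℓ, _, rfl⟩ := Finset.mem_image.1 hz'
          exact hεpos ℓ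
      exact hall t (tset.min'_mem htne)
    have htε : ∀ ℓ, t ≤ ε ℓ := fun ℓ =>
      Finset.min'_le _ _ (Finset.mem_insert_of_mem
        (Finset.mem_image_of_mem _ (Finset.mem_univ ℓ)))
    have hmemP : y + t • v ∈ P := by
      intro ℓ
      show ⟪a ℓ, y + t • v⟫ ≤ b ℓ
      rw [inner_add_right, real_inner_smul_right]
      by_cases h : ⟪a ℓ, y⟫ = b ℓ
      · have h1 := hav ℓ h
        nlinarith
      · have hlt : ⟪a ℓ, y⟫ < b ℓ := lt_of_le_of_ne (hyP ℓ) h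
        have hεl : ε ℓ = (b ℓ - ⟪a ℓ, y⟫) / (|⟪a ℓ, v⟫| + 1) := if_neg h
        have habs : ⟪a ℓ, v⟫ ≤ |⟪a ℓ, v⟫| := le_abs_self _
        have habs0 : (0:ℝ) < |⟪a ℓ, v⟫| + 1 := by positivity
        have hkey : ε ℓ * (|⟪a ℓ, v⟫| + 1) = b ℓ - ⟪a ℓ, y⟫ := by
          rw [hεl, div_mul_cancel₀ _ habs0.ne']
        have h2 : t * ⟪a ℓ, v⟫ ≤ t * (|⟪a ℓ, v⟫| + 1) := by
          apply mul_le_mul_of_nonneg_left _ htpos.le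
          linarith
        have h3 : t * (|⟪a ℓ, v⟫| + 1) ≤ ε ℓ * (|⟪a ℓ, v⟫| + 1) :=
          mul_le_mul_of_nonneg_right (htε ℓ) habs0.le
        linarith
    have hcontra := hnormal _ hmemP
    rw [add_sub_cancel_left, real_inner_smul_right] at hcontra
    nlinarith
  obtain ⟨l, hl0, hlsupp, hlsum⟩ := hdK
  obtain ⟨μ, hμ0, hμl, hμind, hμsum⟩ :=
    conic_carath_aux a (Finset.univ.filter (fun i => l i ≠ 0)).card l hl0 le_rfl
  set S := Finset.univ.filter (fun i => μ i ≠ 0) with hS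
  have hμS : ∀ i, i ∉ S → μ i = 0 := by
    intro i hi
    by_contra h
    exact hi (by simp [hS, h])
  have hindS : LinearIndependent ℝ (fun i : {x // x ∈ S} => a i) := by
    have he : ∀ i : {x // x ∈ S}, μ (i : Fin r) ≠ 0 := fun i =>
      (Finset.mem_filter.1 i.2).2
    exact hμind.comp
      (fun i : {x // x ∈ S} => (⟨(i : Fin r), he i⟩ : {i : Fin r // μ i ≠ 0}))
      (fun i j hij => by
        apply Subtype.ext
        exact congrArg (fun z : {i : Fin r // μ i ≠ 0} => (z : Fin r)) hij)
  have hsum_sub : ∑ i : {x // x ∈ S}, μ i • a (i : Fin r) = x - y := by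
    rw [sum_restrict a S μ hμS, hμsum, ← hlsum]
  have hbound : ∀ i : {x // x ∈ S}, |μ (i : Fin r)| ≤ C S * ‖x - y‖ := by
    intro i
    have h := hC S hindS (fun j => μ (j : Fin r)) i
    rwa [hsum_sub] at h
  have hact : ∀ i, μ i ≠ 0 → ⟪a i, y⟫ = b i := by
    intro i hi
    by_contra h
    exact hμl i hi (hlsupp i h)
  have hane : ∀ i : {x // x ∈ S}, a (i : Fin r) ≠ 0 := fun i => hindS.ne_zero i
  set D : Fin r → ℝ := fun ℓ =>
    infDist x {z : EuclideanSpace ℝ (Fin n) | ⟪a ℓ, z⟫ ≤ b ℓ} with hD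
  have hn2 : ‖x - y‖ ^ 2 = ∑ i : {x // x ∈ S}, μ (i : Fin r) * ⟪a (i : Fin r), x - y⟫ := by
    have h0 : ⟪∑ i : {x // x ∈ S}, μ (i : Fin r) • a (i : Fin r), x - y⟫
        = ‖x - y‖ ^ 2 := by
      rw [hsum_sub, real_inner_self_eq_norm_sq]
    rw [← h0, sum_inner]
    exact Finset.sum_congr rfl fun i _ => real_inner_smul_left _ _ _
  have hterm : ∀ i : {x // x ∈ S},
      μ (i : Fin r) * ⟪a (i : Fin r), x - y⟫
        ≤ (C S * ‖x - y‖) * (M * D (i : Fin r)) := by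
    intro i
    have hμi : μ (i : Fin r) ≠ 0 := (Finset.mem_filter.1 i.2).2
    have h1 : ⟪a (i : Fin r), x - y⟫ = ⟪a (i : Fin r), x⟫ - b (i : Fin r) := by
      rw [inner_sub_right, hact _ hμi]
    have h2 : ⟪a (i : Fin r), x⟫ - b (i : Fin r) ≤ ‖a (i : Fin r)‖ * D (i : Fin r) :=
      halfspace_bound _ (hane i) _ _
    have h3 : ‖a (i : Fin r)‖ * D (i : Fin r) ≤ M * D (i : Fin r) :=
      mul_le_mul_of_nonneg_right (hMle _) infDist_nonneg
    have hμle : μ (i : Fin r) ≤ C S * ‖x - y‖ := (le_abs_self _).trans (hbound i)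
    have hMD : 0 ≤ M * D (i : Fin r) := mul_nonneg hMpos.le infDist_nonneg
    calc μ (i : Fin r) * ⟪a (i : Fin r), x - y⟫
        ≤ μ (i : Fin r) * (M * D (i : Fin r)) := by
          apply mul_le_mul_of_nonneg_left _ (hμ0 _)
          rw [h1]; linarith
      _ ≤ (C S * ‖x - y‖) * (M * D (i : Fin r)) :=
          mul_le_mul_of_nonneg_right hμle hMD
  have hDsub : ∑ i : {x // x ∈ S}, D (i : Fin r) ≤ ∑ ℓ, D ℓ := by
    rw [Finset.sum_coe_sort S D]
    exact Finset.sum_le_sum_of_subset_of_nonneg (Finset.subset_univ S)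
      (fun i _ _ => infDist_nonneg)
  have hsumle : ‖x - y‖ ^ 2 ≤ (C S * ‖x - y‖) * (M * ∑ ℓ, D ℓ) := by
    rw [hn2]
    calc ∑ i : {x // x ∈ S}, μ (i : Fin r) * ⟪a (i : Fin r), x - y⟫
        ≤ ∑ i : {x // x ∈ S}, (C S * ‖x - y‖) * (M * D (i : Fin r)) :=
          Finset.sum_le_sum fun i _ => hterm i
      _ = (C S * ‖x - y‖) * (M * ∑ i : {x // x ∈ S}, D (i : Fin r)) := by
          rw [Finset.mul_sum]
          congr 1
          rw [Finset.mul_sum]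
      _ ≤ (C S * ‖x - y‖) * (M * ∑ ℓ, D ℓ) := by
          apply mul_le_mul_of_nonneg_left _
            (mul_nonneg (hCpos S).le (norm_nonneg _))
          exact mul_le_mul_of_nonneg_left hDsub hMpos.le
  have hnpos : 0 < ‖x - y‖ := norm_pos_iff.2 hxy
  have hfin : ‖x - y‖ ≤ (C S * M) * ∑ ℓ, D ℓ := by
    have h5 : ‖x - y‖ * ‖x - y‖ ≤ ((C S * M) * ∑ ℓ, D ℓ) * ‖x - y‖ := by
      nlinarith [hsumle]
    exact le_of_mul_le_mul_right h5 hnpos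
  have h6 : (C S * M) * ∑ ℓ, D ℓ ≤ c * ∑ ℓ, D ℓ := by
    apply mul_le_mul_of_nonneg_right _ hDnonneg
    rw [hc]
    exact mul_le_mul_of_nonneg_right (hCle S) hMpos.le
  exact hfin.trans h6
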